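/- If a rotation maps a ray bijectively onto itself, then it fixes that ray pointwise: for u ≠ 0 and d ∈ D, d(ℝ≥0 u) = ℝ≥0 u implies d u = u. -/
import Mathlib


/-- The ray (half-line) spanned by `v`: all nonnegative multiples of `v`. -/
def Ray' {V : Type*} [AddCommGroup V] [Module ℝ V] (v : V) : Set V :=
  {x | ∃ c : ℝ, 0 ≤ c ∧ x = c • v}

/-- The half-plane `ℝ v + ℝ≥0 w`. -/
def HalfPlane {V : Type*} [AddCommGroup V] [Module ℝ V] (v w : V) : Set V :=
  {x | ∃ a b : ℝ, 0 ≤ b ∧ x = a • v + b • w}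

/-- `D` is a rotation group: for any two pairs of (half-plane, ray on its boundary)
there is exactly one element of `D` mapping the first pair to the second. -/
def IsRotationGroup {V : Type*} [AddCommGroup V] [Module ℝ V]
    (D : Subgroup (V ≃ₗ[ℝ] V)) : Prop :=
  ∀ v w v' w' : V, LinearIndependent ℝ ![v, w] → LinearIndependent ℝ ![v', w'] →
    ∃! d : V ≃ₗ[ℝ] V, d ∈ D ∧
      (d : V ≃ₗ[ℝ] V) '' HalfPlane v w = HalfPlane v' w' ∧
      (d : V ≃ₗ[ℝ] V) '' Ray' v = Ray' v'

/-- `w ⊥ v` : some rotation sends `w` to `-w` and fixes `v`. -/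
def Perp {V : Type*} [AddCommGroup V] [Module ℝ V]
    (D : Subgroup (V ≃ₗ[ℝ] V)) (w v : V) : Prop :=
  ∃ r ∈ D, r w = -w ∧ r v = v

namespace Stmt8Aux

variable {V : Type*} [AddCommGroup V] [Module ℝ V]

lemma image_halfPlane (e : V ≃ₗ[ℝ] V) (v w : V) :
    ⇑e '' HalfPlane v w = HalfPlane (e v) (e w) := by
  ext x
  constructor
  · rintro ⟨y, ⟨a, b, hb, rfl⟩, rfl⟩
    exact ⟨a, b, hb, by simp⟩
  · rintro ⟨a, b, hb, rfl⟩
    exact ⟨a • v + b • w, ⟨a, b, hb, rfl⟩, by simp⟩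

lemma image_ray (e : V ≃ₗ[ℝ] V) (v : V) :
    ⇑e '' Ray' v = Ray' (e v) := by
  ext x
  constructor
  · rintro ⟨y, ⟨c, hc, rfl⟩, rfl⟩
    exact ⟨c, hc, by simp⟩
  · rintro ⟨c, hc, rfl⟩
    exact ⟨c • v, ⟨c, hc, rfl⟩, by simp⟩

lemma halfPlane_smul_left {c : ℝ} (hc : c ≠ 0) (v w : V) :
    HalfPlane (c • v) w = HalfPlane v w := by
  ext x
  constructor
  · rintro ⟨a, b, hb, rfl⟩
    exact ⟨a * c, b, hb, by rw [← smul_smul]⟩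
  · rintro ⟨a, b, hb, rfl⟩
    exact ⟨a / c, b, hb, by rw [smul_smul, div_mul_cancel₀ _ hc]⟩

lemma halfPlane_smul_add {t : ℝ} (ht : 0 < t) (v x : V) (μ : ℝ) :
    HalfPlane v (t • x + μ • v) = HalfPlane v x := by
  ext y
  constructor
  · rintro ⟨a, b, hb, rfl⟩
    refine ⟨a + b * μ, b * t, by positivity, by module⟩
  · rintro ⟨a, b, hb, rfl⟩
    refine ⟨a - b / t * μ, b / t, by positivity, ?_⟩
    match_scalars
    · ring
    · field_simp

lemma ray_smul {t : ℝ} (ht : 0 < t) (v : V) : Ray' (t • v) = Ray' v := by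
  ext x
  constructor
  · rintro ⟨c, hc, rfl⟩
    exact ⟨c * t, by positivity, by rw [← smul_smul]⟩
  · rintro ⟨c, hc, rfl⟩
    refine ⟨c / t, by positivity, by rw [smul_smul, div_mul_cancel₀ _ ht.ne']⟩

lemma pair_indep {u y : V} (hu : u ≠ 0) (hy : y ∉ Submodule.span ℝ {u}) :
    LinearIndependent ℝ ![u, y] := by
  rw [LinearIndependent.pair_iff]
  intro s t hst
  by_cases ht : t = 0
  · subst ht
    rw [zero_smul, add_zero] at hst
    rcases smul_eq_zero.1 hst with h | h
    · exact ⟨h, rfl⟩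
    · exact absurd h hu
  · exfalso
    apply hy
    rw [Submodule.mem_span_singleton]
    refine ⟨-(s / t), ?_⟩
    have h2 : t • y = (-s) • u := by
      have : t • y = 0 - s • u := by rw [← hst]; abel
      rw [this]; module
    have h3 := congrArg (fun z => (t⁻¹ : ℝ) • z) h2
    simp only [smul_smul] at h3
    rw [inv_mul_cancel₀ ht, one_smul] at h3
    rw [h3]
    match_scalars
    field_simp


lemma ne_zero_left_of_pair {u x : V} (hind : LinearIndependent ℝ ![u, x]) : u ≠ 0 := by
  have := hind.ne_zero 0
  simpa using this

lemma pair_neg_left {u w : V} (h : LinearIndependent ℝ ![u, w]) :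
    LinearIndependent ℝ ![-u, w] := by
  rw [LinearIndependent.pair_iff] at h ⊢
  intro s t hst
  have h2 : (-s) • u + t • w = 0 := by rw [← hst]; module
  obtain ⟨h3, h4⟩ := h (-s) t h2
  exact ⟨by linarith [neg_eq_zero.1 (by exact_mod_cast h3)], h4⟩

lemma master {D : Subgroup (V ≃ₗ[ℝ] V)} (hD : IsRotationGroup D)
    {e : V ≃ₗ[ℝ] V} (he : e ∈ D) {u x : V} (hind : LinearIndependent ℝ ![u, x])
    {c lam mu : ℝ} (hc : c ≠ 0) (hlam : lam ≠ 0)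
    (h1 : e u = c • u) (h2 : e x = lam • x + mu • u) :
    e * e = 1 ∧ c ^ 2 = 1 ∧ lam ^ 2 = 1 := by
  have hu0 : u ≠ 0 := ne_zero_left_of_pair hind
  have hee_u : (e * e) u = (c ^ 2) • u := by
    show e (e u) = _
    rw [h1, map_smul, h1, smul_smul]
    ring_nf
  have hee_x : (e * e) x = (lam ^ 2) • x + (lam * mu + mu * c) • u := by
    show e (e x) = _
    rw [h2, map_add, map_smul, map_smul, h2, h1]
    module
  have hc2 : (c ^ 2 : ℝ) ≠ 0 := pow_ne_zero 2 hc
  have hlam2 : (0 : ℝ) < lam ^ 2 := pow_two_pos_of_ne_zero hlam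
  have himg1 : ⇑(e * e) '' HalfPlane u x = HalfPlane u x := by
    rw [image_halfPlane, hee_u, hee_x, halfPlane_smul_left hc2, halfPlane_smul_add hlam2]
  have himg2 : ⇑(e * e) '' Ray' u = Ray' u := by
    rw [image_ray, hee_u, ray_smul (lt_of_le_of_ne (sq_nonneg c) (Ne.symm hc2))]
  obtain ⟨g, _, hguniq⟩ := hD u x u x hind hind
  have h_ee : e * e = g := hguniq (e * e) ⟨mul_mem he he, himg1, himg2⟩
  have h_id : (1 : V ≃ₗ[ℝ] V) = g := by
    refine hguniq 1 ⟨one_mem D, ?_, ?_⟩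
    · show id '' HalfPlane u x = HalfPlane u x
      exact Set.image_id _
    · show id '' Ray' u = Ray' u
      exact Set.image_id _
  have key : e * e = 1 := by rw [h_ee, ← h_id]
  have hcu : (c ^ 2) • u = u := by
    rw [← hee_u, key]; rfl
  have hcsq : c ^ 2 = 1 := by
    have h5 : (c ^ 2 - 1) • u = 0 := by rw [sub_smul, hcu, one_smul, sub_self]
    rcases smul_eq_zero.1 h5 with h6 | h6
    · linarith [sub_eq_zero.1 (by exact_mod_cast h6)]
    · exact absurd h6 hu0
  have hxu : (lam ^ 2) • x + (lam * mu + mu * c) • u = x := by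
    rw [← hee_x, key]; rfl
  have hlsq : lam ^ 2 = 1 := by
    have h5 : (lam * mu + mu * c) • u + (lam ^ 2 - 1) • x = 0 := by
      linear_combination (norm := module) hxu
    obtain ⟨-, h7⟩ := LinearIndependent.pair_iff.1 hind _ _ h5
    linarith [sub_eq_zero.1 h7]
  exact ⟨key, hcsq, hlsq⟩

lemma quadeig {D : Subgroup (V ≃ₗ[ℝ] V)} (hD : IsRotationGroup D)
    {e : V ≃ₗ[ℝ] V} (he : e ∈ D) {u : V} (hu : u ≠ 0) {c : ℝ} (hc : c ≠ 0)
    (heu : e u = c • u) {w z : V}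
    (hwz : ∀ s t : ℝ, s • w + t • z ∈ Submodule.span ℝ {u} → s = 0 ∧ t = 0)
    {A C b2 E m1 m2 : ℝ}
    (hew : e w = A • w + C • z + m1 • u)
    (hez : e z = b2 • w + E • z + m2 • u)
    (hdisc : 0 ≤ (A + E) ^ 2 - 4 * (A * E - C * b2)) :
    c ^ 2 = 1 := by
  have hspan : ∀ y : V, (∃ m : ℝ, e y = m • u) → y ∈ Submodule.span ℝ {u} := by
    rintro y ⟨m, hm⟩
    have hinv : e ((m * c⁻¹) • u) = m • u := by
      rw [map_smul, heu, smul_smul]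
      rw [mul_assoc, inv_mul_cancel₀ hc, mul_one]
    have : y = (m * c⁻¹) • u := e.injective (by rw [hm, hinv])
    exact Submodule.mem_span_singleton.2 ⟨_, this.symm⟩
  have hwns : w ∉ Submodule.span ℝ {u} := by
    intro hmem
    have := hwz 1 0 (by simpa using hmem)
    exact one_ne_zero this.1
  by_cases hC : C = 0
  · have hA : A ≠ 0 := by
      intro h0
      apply hwns
      apply hspan
      exact ⟨m1, by rw [hew, hC, h0, zero_smul, zero_smul, zero_add, zero_add]⟩
    have hindw : LinearIndependent ℝ ![u, w] := pair_indep hu hwns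
    have h2 : e w = A • w + m1 • u := by
      rw [hew, hC, zero_smul, add_zero]
    exact (master hD he hindw hc hA heu h2).2.1
  · set s := Real.sqrt ((A + E) ^ 2 - 4 * (A * E - C * b2)) with hs_def
    have hs : s ^ 2 = (A + E) ^ 2 - 4 * (A * E - C * b2) := Real.sq_sqrt hdisc
    set rho := (A + E + s) / 2 with hrho_def
    have hkey : rho ^ 2 - (A + E) * rho + (A * E - C * b2) = 0 := by
      rw [hrho_def]
      linear_combination hs / 4
    set y := (rho - E) • w + C • z with hy_def
    have hey : e y = rho • y + ((rho - E) * m1 + C * m2) • u := by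
      rw [hy_def, map_add, map_smul, map_smul, hew, hez]
      have hwc : (rho - E) * A + C * b2 = rho * (rho - E) := by linear_combination -hkey
      match_scalars
      · linear_combination -hkey
      · ring
      · ring
    have hyns : y ∉ Submodule.span ℝ {u} := by
      intro hmem
      exact hC (hwz _ _ hmem).2
    have hrho0 : rho ≠ 0 := by
      intro h0
      apply hyns
      apply hspan
      exact ⟨_, by rw [hey, h0, zero_smul, zero_add]⟩
    have hind : LinearIndependent ℝ ![u, y] := pair_indep hu hyns
    exact (master hD he hind hc hrho0 heu hey).2.1

end Stmt8Aux

set_option maxHeartbeats 1000000 in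
theorem stmt8 {V : Type*} [AddCommGroup V] [Module ℝ V]
    (hdim : Module.finrank ℝ V = 3)
    (D : Subgroup (V ≃ₗ[ℝ] V)) (hD : IsRotationGroup D)
    (u : V) (hu : u ≠ 0) (d : V ≃ₗ[ℝ] V) (hd : d ∈ D)
    (h : (d : V ≃ₗ[ℝ] V) '' Ray' u = Ray' u) : d u = u := by
  classical
  open Stmt8Aux in
  -- Step 1: d u = t • u with t > 0
  have humem : u ∈ Ray' u := ⟨1, zero_le_one, (one_smul ℝ u).symm⟩
  have hmem : d u ∈ Ray' u := by
    rw [← h]; exact Set.mem_image_of_mem _ humem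
  obtain ⟨t, ht0, hdu⟩ := hmem
  have hdune : d u ≠ 0 := by
    rw [ne_eq, LinearEquiv.map_eq_zero_iff]; exact hu
  have htne : t ≠ 0 := by
    intro h0; apply hdune; rw [hdu, h0, zero_smul]
  have htpos : 0 < t := lt_of_le_of_ne ht0 (Ne.symm htne)
  suffices ht1 : t = 1 by rw [hdu, ht1, one_smul]
  -- finite dimensionality
  have hfd : FiniteDimensional ℝ V :=
    FiniteDimensional.of_finrank_pos (by rw [hdim]; norm_num)
  set p := Submodule.span ℝ {u} with hp
  -- Step 2: choose w ∉ span{u}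
  have hwex : ∃ w, w ∉ p := by
    by_contra hcon
    push_neg at hcon
    have hptop : p = ⊤ := Submodule.eq_top_iff'.2 hcon
    have h1 : Module.finrank ℝ p = 1 := finrank_span_singleton hu
    rw [hptop, finrank_top, hdim] at h1
    norm_num at h1
  obtain ⟨w, hwp⟩ := hwex
  have hindw : LinearIndependent ℝ ![u, w] := Stmt8Aux.pair_indep hu hwp
  have hindw' : LinearIndependent ℝ ![-u, w] := Stmt8Aux.pair_neg_left hindw
  -- Step 3: the mirror involution ψ
  obtain ⟨ψ, ⟨hψD, hψH, hψR⟩, -⟩ := hD u w (-u) w hindw hindw'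
  have hψu_mem : ψ u ∈ Ray' (-u) := by
    rw [← hψR]; exact Set.mem_image_of_mem _ humem
  obtain ⟨t₁, ht₁0, hψu'⟩ := hψu_mem
  have hψu : ψ u = (-t₁) • u := by rw [hψu']; module
  have hψune : ψ u ≠ 0 := by
    rw [ne_eq, LinearEquiv.map_eq_zero_iff]; exact hu
  have ht₁ne : (-t₁ : ℝ) ≠ 0 := by
    intro h0; apply hψune; rw [hψu, h0, zero_smul]
  have hwmem : w ∈ HalfPlane u w := ⟨0, 1, zero_le_one, by simp⟩
  have hψw_mem : ψ w ∈ HalfPlane (-u) w := by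
    rw [← hψH]; exact Set.mem_image_of_mem _ hwmem
  obtain ⟨a', b, hb0, hψw'⟩ := hψw_mem
  have hψw : ψ w = b • w + (-a') • u := by rw [hψw']; module
  have hbne : b ≠ 0 := by
    intro h0
    have h1 : ψ ((-t₁) • w - (-a') • u) = 0 := by
      rw [map_sub, map_smul, map_smul, hψw, hψu, h0, zero_smul, zero_add]
      module
    have h2 : (-t₁) • w - (-a') • u = 0 := LinearEquiv.map_eq_zero_iff ψ |>.1 h1
    have h3 : (a') • u + (-t₁) • w = 0 := by rw [← h2]; module
    obtain ⟨-, h5⟩ := LinearIndependent.pair_iff.1 hindw _ _ h3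
    exact ht₁ne h5
  obtain ⟨hψψ, hc₁sq, hbsq⟩ :=
    Stmt8Aux.master hD hψD hindw ht₁ne hbne hψu (by rw [hψw])
  have hb1 : b = 1 := by
    have hfac : (b - 1) * (b + 1) = 0 := by linear_combination hbsq
    rcases mul_eq_zero.1 hfac with h6 | h6
    · linarith [sub_eq_zero.1 h6]
    · exfalso; nlinarith
  have ht₁1 : (-t₁ : ℝ) = -1 := by
    have hfac : (-t₁ - 1) * (-t₁ + 1) = 0 := by linear_combination hc₁sq
    rcases mul_eq_zero.1 hfac with h6 | h6
    · exfalso; nlinarith [sub_eq_zero.1 h6]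
    · linarith
  have hψu2 : ψ u = -u := by rw [hψu, ht₁1]; module
  set q : ℝ := -a' with hq
  have hψw1 : ψ w = w + q • u := by rw [hψw, hb1, hq]; module
  -- Step 4: quotient setup and z
  have hfq : Module.finrank ℝ (V ⧸ p) = 2 := by
    have h1 := Submodule.finrank_quotient_add_finrank p
    have h2 : Module.finrank ℝ p = 1 := finrank_span_singleton hu
    rw [hdim] at h1
    have h2 : Module.finrank ℝ p = 1 := by rw [hp]; exact finrank_span_singleton hu
    omega
  have hπw : (p.mkQ w : V ⧸ p) ≠ 0 := by
    rw [Submodule.mkQ_apply, ne_eq, Submodule.Quotient.mk_eq_zero]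
    exact hwp
  have hzex : ∃ zb : V ⧸ p, zb ∉ Submodule.span ℝ {p.mkQ w} := by
    by_contra hcon
    push_neg at hcon
    have hptop : Submodule.span ℝ {p.mkQ w} = ⊤ := Submodule.eq_top_iff'.2 hcon
    have h1 : Module.finrank ℝ (Submodule.span ℝ {p.mkQ w}) = 1 :=
      finrank_span_singleton hπw
    rw [hptop, finrank_top, hfq] at h1
    norm_num at h1
  obtain ⟨zb, hzb⟩ := hzex
  obtain ⟨z, hz⟩ := Submodule.mkQ_surjective p zb
  have hindQ : LinearIndependent ℝ ![p.mkQ w, p.mkQ z] :=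
    Stmt8Aux.pair_indep hπw (by rw [hz]; exact hzb)
  have hindwz : ∀ s t' : ℝ, s • w + t' • z ∈ p → s = 0 ∧ t' = 0 := by
    intro s t' hst
    have h0 : s • p.mkQ w + t' • p.mkQ z = 0 := by
      rw [← map_smul, ← map_smul, ← map_add, Submodule.mkQ_apply,
        Submodule.Quotient.mk_eq_zero]
      exact hst
    exact LinearIndependent.pair_iff.1 hindQ s t' h0
  -- decomposition of any vector modulo p in terms of w, z
  have hdecomp : ∀ x : V, ∃ α β m : ℝ, x = α • w + β • z + m • u := by
    intro x
    have hcard : Fintype.card (Fin 2) = Module.finrank ℝ (V ⧸ p) := by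
      rw [hfq]; rfl
    set B := basisOfLinearIndependentOfCardEqFinrank hindQ hcard with hB
    have hBc := coe_basisOfLinearIndependentOfCardEqFinrank hindQ hcard
    have hB0 : B 0 = p.mkQ w := by rw [hB, hBc]; rfl
    have hB1 : B 1 = p.mkQ z := by rw [hB, hBc]; rfl
    have hsum := B.sum_repr (p.mkQ x)
    rw [Fin.sum_univ_two, hB0, hB1] at hsum
    refine ⟨B.repr (p.mkQ x) 0, B.repr (p.mkQ x) 1, ?_⟩
    have hmem : x - (B.repr (p.mkQ x) 0 • w + B.repr (p.mkQ x) 1 • z) ∈ p := by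
      rw [← Submodule.Quotient.mk_eq_zero p, ← Submodule.mkQ_apply, map_sub, map_add,
        map_smul, map_smul, hsum]
      simp
    have hmem' : x - (B.repr (p.mkQ x) 0 • w + B.repr (p.mkQ x) 1 • z) ∈
        Submodule.span ℝ {u} := hmem
    obtain ⟨m, hm⟩ := Submodule.mem_span_singleton.1 hmem' 
    exact ⟨m, by linear_combination (norm := module) -hm⟩
  obtain ⟨A, C, m1, hew⟩ := hdecomp (d w)
  obtain ⟨b2, E, m2, hez⟩ := hdecomp (d z)
  obtain ⟨f, g, s2, hψz⟩ := hdecomp (ψ z)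
  -- analyse g via ψ ∘ ψ = 1
  have hψψz : ψ (ψ z) = z := by
    have := DFunLike.congr_fun hψψ z
    simpa using this
  have hcomp : (f + g * f) • w + (g * g - 1) • z + (f * q + g * s2 - s2) • u = 0 := by
    have h1 : ψ (ψ z) = (f + g * f) • w + (g * g) • z + (f * q + g * s2 - s2) • u := by
      rw [hψz, map_add, map_add, map_smul, map_smul, map_smul, hψw1, hψz, hψu2]
      module
    rw [hψψz] at h1
    linear_combination (norm := module) -h1
  have hup : (f * q + g * s2 - s2) • u ∈ p := by
    rw [hp]
    exact Submodule.smul_mem _ _ (Submodule.mem_span_singleton_self u)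
  have hfg : (f + g * f) = 0 ∧ (g * g - 1) = 0 := by
    apply hindwz
    have h2 : (f + g * f) • w + (g * g - 1) • z = -((f * q + g * s2 - s2) • u) := by
      linear_combination (norm := module) hcomp
    rw [h2]
    exact Submodule.neg_mem _ hup
  have hg : g = -1 := by
    have hfac : (g - 1) * (g + 1) = 0 := by linear_combination hfg.2
    rcases mul_eq_zero.1 hfac with h6 | h6
    · -- g = 1 : leads to ψ = 1, contradiction
      exfalso
      have hg1 : g = 1 := by linarith [sub_eq_zero.1 h6]
      have hf0 : f = 0 := by
        have := hfg.1
        rw [hg1] at this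
        linarith
      have hψz1 : ψ z = z + s2 • u := by rw [hψz, hg1, hf0]; module
      set n := w + (q / 2) • u with hn
      set z' := z + (s2 / 2) • u with hz'
      have hψn : ψ n = n := by
        rw [hn, map_add, map_smul, hψw1, hψu2]
        module
      have hψz' : ψ z' = z' := by
        rw [hz', map_add, map_smul, hψz1, hψu2]
        module
      have hind2 : LinearIndependent ℝ ![n, z'] := by
        rw [LinearIndependent.pair_iff]
        intro α β hab
        apply hindwz
        have h7 : α • w + β • z = -((α * (q / 2) + β * (s2 / 2)) • u) := by
          rw [hn, hz'] at hab
          linear_combination (norm := module) hab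
        rw [h7]
        refine Submodule.neg_mem _ ?_
        rw [hp]
        exact Submodule.smul_mem _ _ (Submodule.mem_span_singleton_self u)
      obtain ⟨gg, -, hgguniq⟩ := hD n z' n z' hind2 hind2
      have e1 : ψ = gg := by
        refine hgguniq ψ ⟨hψD, ?_, ?_⟩
        · rw [Stmt8Aux.image_halfPlane, hψn, hψz']
        · rw [Stmt8Aux.image_ray, hψn]
      have e2 : (1 : V ≃ₗ[ℝ] V) = gg := by
        refine hgguniq 1 ⟨one_mem D, ?_, ?_⟩
        · show id '' HalfPlane n z' = HalfPlane n z'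
          exact Set.image_id _
        · show id '' Ray' n = Ray' n
          exact Set.image_id _
      have hψ1 : ψ = 1 := by rw [e1, ← e2]
      have hcontra : ψ u = u := by rw [hψ1]; rfl
      rw [hψu2] at hcontra
      have h2u : (2 : ℝ) • u = 0 := by
        rw [two_smul]
        nth_rewrite 1 [← hcontra]
        exact neg_add_cancel u
      rcases smul_eq_zero.1 h2u with h8 | h8
      · norm_num at h8
      · exact hu h8
    · linarith
  -- Step 5: eigenvalue dichotomy
  by_cases hdisc : 0 ≤ (A + E) ^ 2 - 4 * (A * E - C * b2)
  · have hc2 : t ^ 2 = 1 :=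
      Stmt8Aux.quadeig hD hd hu htne hdu hindwz hew hez hdisc
    have hfac : (t - 1) * (t + 1) = 0 := by linear_combination hc2
    rcases mul_eq_zero.1 hfac with h6 | h6
    · linarith [sub_eq_zero.1 h6]
    · exfalso; nlinarith
  · push_neg at hdisc
    set e' := d * ψ with he'
    have he'D : e' ∈ D := mul_mem hd hψD
    have he'u : e' u = (-t) • u := by
      show d (ψ u) = _
      rw [hψu2, map_neg, hdu]
      module
    have he'w : e' w = A • w + C • z + (m1 + q * t) • u := by
      show d (ψ w) = _
      rw [hψw1, map_add, map_smul, hdu, hew]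
      module
    have he'z : e' z = (f * A - b2) • w + (f * C - E) • z + (f * m1 - m2 + s2 * t) • u := by
      show d (ψ z) = _
      rw [hψz, hg, map_add, map_add, map_smul, map_smul, map_smul, hew, hez, hdu]
      module
    have htne' : (-t : ℝ) ≠ 0 := by simpa using htne
    have hdisc2 : 0 ≤ (A + (f * C - E)) ^ 2 -
        4 * (A * (f * C - E) - C * (f * A - b2)) := by
      have hring : A * (f * C - E) - C * (f * A - b2) = -(A * E - C * b2) := by ring
      rw [hring]
      linarith [sq_nonneg (A + E), sq_nonneg (A + (f * C - E))]
    have hc2 : (-t) ^ 2 = 1 :=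
      Stmt8Aux.quadeig hD he'D hu htne' he'u hindwz he'w he'z hdisc2
    have hc2' : t ^ 2 = 1 := by nlinarith
    have hfac : (t - 1) * (t + 1) = 0 := by linear_combination hc2'
    rcases mul_eq_zero.1 hfac with h6 | h6
    · linarith [sub_eq_zero.1 h6]
    · exfalso; nlinarith
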